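/- Let d ≥ 3, t ≥ 1, and n ≥ 2t be integers, and let x = x_1...x_n and y = y_1...y_n be vertices of the undirected de Bruijn graph B(d,n) such that (x_1,...,x_{n-t}) ≠ (y_1,...,y_{n-t}). Then there exists a vertex a = a_1...a_n with a_{t+i} = x_i for all 1 ≤ i ≤ n-t such that d(x,a) ≤ t and d(y,a) > t; in particular B_t(x) ≠ B_t(y). -/

import Mathlib

/-- The undirected de Bruijn graph `B(d,n)`: vertices are strings of length `n`
over the alphabet `{0, ..., d-1}`, and two distinct strings `x`, `y` are adjacent
iff `x_{i+1} = y_i` for all valid `i`, or `y_{i+1} = x_i` for all valid `i`. -/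
def deBruijnGraph (d n : ℕ) : SimpleGraph (Fin n → Fin d) where
  Adj x y := x ≠ y ∧
    ((∀ i : Fin n, ∀ h : (i : ℕ) + 1 < n, x ⟨(i : ℕ) + 1, h⟩ = y i) ∨
     (∀ i : Fin n, ∀ h : (i : ℕ) + 1 < n, y ⟨(i : ℕ) + 1, h⟩ = x i))
  symm := ⟨fun x y ⟨hxy, h⟩ => ⟨hxy.symm, h.symm⟩⟩
  loopless := ⟨fun x ⟨hxx, _⟩ => hxx rfl⟩

/-- The ball of radius `t` around a vertex `x`. -/
def ball {V : Type*} (G : SimpleGraph V) (t : ℕ) (x : V) : Set V :=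
  {y | G.dist x y ≤ t}

/-- A set `S` of vertices is a `t`-identifying code if every ball of radius `t`
meets `S`, and distinct vertices have distinct identifying sets `B_t(x) ∩ S`. -/
def IsIdentifyingCode {V : Type*} (G : SimpleGraph V) (t : ℕ) (S : Set V) : Prop :=
  (∀ x : V, (ball G t x ∩ S).Nonempty) ∧
  ∀ x y : V, x ≠ y → ball G t x ∩ S ≠ ball G t y ∩ S

/-- Key structural lemma: along any walk from `y` to `a` in the de Bruijn graph,
there is a net shift `s` and front/back consumption data `p`, `q` so that the
middle of `y` survives in `a`, shifted by `s`. -/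
lemma deBruijn_survivors {d n : ℕ} (y a : Fin n → Fin d)
    (w : (deBruijnGraph d n).Walk y a) :
    ∃ s : ℤ, ∃ p q : ℕ, -(p:ℤ) ≤ s ∧ s ≤ (q:ℤ) ∧ 2*p + 2*q ≤ w.length + s.natAbs ∧
      ∀ (i j : ℕ) (hi : i < n) (hj : j < n), (j:ℤ) = (i:ℤ) + s → p ≤ i → i + q + 1 ≤ n →
        a ⟨j, hj⟩ = y ⟨i, hi⟩ := by
  induction w with
  | nil =>
    exact ⟨0, 0, 0, by simp, by simp, by simp, fun i j hi hj hij _ _ => by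
      have : j = i := by omega
      subst this; rfl⟩
  | @cons y b a h w ih =>
    obtain ⟨s, p, q, hps, hsq, hbud, hsur⟩ := ih
    obtain ⟨hne, hadj | hadj⟩ := id h
    · -- y ⟨i+1⟩ = b i : b is a left shift of y
      refine ⟨s - 1, p + 1, q - 1, by omega, by omega, ?_, ?_⟩
      · have : (s-1).natAbs + 1 ≥ s.natAbs ∧ (q = 0 → s ≤ 0 → (s-1).natAbs = s.natAbs + 1) := by
          omega
        simp only [SimpleGraph.Walk.length_cons]
        omega
      · intro i j hi hj hij hpi hiq
        obtain ⟨i', rfl⟩ : ∃ i', i = i' + 1 := ⟨i - 1, by omega⟩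
        have hi' : i' < n := by omega
        have hstep : (j:ℤ) = (i' : ℤ) + s := by omega
        have h1 : a ⟨j, hj⟩ = b ⟨i', hi'⟩ := hsur i' j hi' hj hstep (by omega) (by omega)
        have h2 : y ⟨i' + 1, hi⟩ = b ⟨i', hi'⟩ := hadj ⟨i', hi'⟩ hi
        rw [h1, ← h2]
    · -- b ⟨i+1⟩ = y i : b is a right shift of y
      refine ⟨s + 1, p - 1, q + 1, by omega, by omega, ?_, ?_⟩
      · have : (s+1).natAbs + 1 ≥ s.natAbs ∧ (p = 0 → 0 ≤ s → (s+1).natAbs = s.natAbs + 1) := by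
          omega
        simp only [SimpleGraph.Walk.length_cons]
        omega
      · intro i j hi hj hij hpi hiq
        have hi' : i + 1 < n := by omega
        have hstep : (j:ℤ) = ((i+1 : ℕ):ℤ) + s := by omega
        have h1 : a ⟨j, hj⟩ = b ⟨i+1, hi'⟩ := hsur (i+1) j hi' hj hstep (by omega) (by omega)
        have h2 : b ⟨(i:ℕ) + 1, hi'⟩ = y ⟨i, hi⟩ := hadj ⟨i, hi⟩ hi'
        rw [h1, h2]

/-- If `a` agrees with `z` shifted right by `k`, then there is a walk from `z`
to `a` of length at most `k`. -/
lemma deBruijn_shift_walk {d n : ℕ} :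
    ∀ (k : ℕ) (z a : Fin n → Fin d),
      (∀ (i : ℕ) (hi : i < n), k ≤ i → a ⟨i, hi⟩ = z ⟨i - k, by omega⟩) →
      ∃ w : (deBruijnGraph d n).Walk z a, w.length ≤ k := by
  intro k
  induction k with
  | zero =>
    intro z a h
    have : a = z := funext fun i => by
      have := h i i.2 (Nat.zero_le _)
      simpa using this
    subst this
    exact ⟨SimpleGraph.Walk.nil, by simp⟩
  | succ k ih =>
    intro z a h
    rcases Nat.eq_zero_or_pos n with hn0 | hn0
    · have : a = z := funext fun i => absurd i.2 (by omega)
      subst this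
      exact ⟨SimpleGraph.Walk.nil, by simp⟩
    · set b : Fin n → Fin d := fun i =>
        if h2 : (i:ℕ) + 1 < n then a ⟨(i:ℕ)+1, h2⟩ else z ⟨(i:ℕ) - k, by omega⟩ with hb
      have hbz : ∀ (i : ℕ) (hi : i < n), k ≤ i → b ⟨i, hi⟩ = z ⟨i - k, by omega⟩ := by
        intro i hi hki
        by_cases h2 : i + 1 < n
        · have : b ⟨i, hi⟩ = a ⟨i+1, h2⟩ := by simp only [hb]; rw [dif_pos h2]
          rw [this, h i.succ h2 (by omega)]
          congr 1
          exact Fin.ext (by simp [Nat.succ_sub_one]) <;> omega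
        · simp only [hb]; rw [dif_neg h2]
      obtain ⟨w, hw⟩ := ih z b hbz
      by_cases hba : b = a
      · exact ⟨w.copy rfl hba, by rw [SimpleGraph.Walk.length_copy]; omega⟩
      · have hadj : (deBruijnGraph d n).Adj b a := by
          refine ⟨hba, Or.inr ?_⟩
          intro i hI
          simp only [hb]
          rw [dif_pos hI]
        exact ⟨w.concat hadj, by rw [SimpleGraph.Walk.length_concat]; omega⟩

lemma exists_third {d : ℕ} (hd : 3 ≤ d) (u v : Fin d) : ∃ c : Fin d, c ≠ u ∧ c ≠ v := by
  by_contra hcon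
  push_neg at hcon
  have hsub : (Finset.univ : Finset (Fin d)) ⊆ {u, v} := by
    intro c _
    rcases eq_or_ne c u with h | h
    · simp [h]
    · simp [hcon c h]
  have := Finset.card_le_card hsub
  have h2 : ({u, v} : Finset (Fin d)).card ≤ 2 := Finset.card_insert_le _ _ |>.trans (by simp)
  simp [Finset.card_univ] at this
  omega

theorem prefix_separation (d t n : ℕ) (hd : 3 ≤ d) (ht : 1 ≤ t) (hn : 2 * t ≤ n)
    (x y : Fin n → Fin d)
    (hpre : ∃ i : ℕ, ∃ hi : i < n - t, x ⟨i, by omega⟩ ≠ y ⟨i, by omega⟩) :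
    (∃ a : Fin n → Fin d,
      (∀ i : ℕ, ∀ hi : i < n - t, a ⟨t + i, by omega⟩ = x ⟨i, by omega⟩) ∧
      (deBruijnGraph d n).dist x a ≤ t ∧
      t < (deBruijnGraph d n).dist y a) ∧
    ball (deBruijnGraph d n) t x ≠ ball (deBruijnGraph d n) t y := by
  have hnt : t + 1 ≤ n := by omega
  -- choose the free prefix
  have hchoice : ∀ j : ℕ, j < t →
      ∃ c : Fin d, c ≠ y ⟨t-1-j, by omega⟩ ∧ c ≠ y ⟨t-j, by omega⟩ :=
    fun j _ => exists_third hd _ _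
  classical
  set a : Fin n → Fin d := fun i =>
    if h : (i:ℕ) < t then Classical.choose (hchoice i h)
    else x ⟨(i:ℕ) - t, by omega⟩ with ha
  have ha_x : ∀ (j : ℕ) (hj : j < n), t ≤ j → a ⟨j, hj⟩ = x ⟨j - t, by omega⟩ := by
    intro j hj htj
    simp only [ha]
    rw [dif_neg (by omega)]
  have ha_free : ∀ (j : ℕ) (hj : j < n) (h : j < t),
      a ⟨j, hj⟩ ≠ y ⟨t-1-j, by omega⟩ ∧ a ⟨j, hj⟩ ≠ y ⟨t-j, by omega⟩ := by
    intro j hj h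
    have : a ⟨j, hj⟩ = Classical.choose (hchoice j h) := by
      simp only [ha]; rw [dif_pos h]
    rw [this]
    exact Classical.choose_spec (hchoice j h)
  -- distance from x to a
  have hxa : (deBruijnGraph d n).dist x a ≤ t := by
    obtain ⟨w, hw⟩ := deBruijn_shift_walk t x a (fun i hi hti => ha_x i hi hti)
    exact le_trans (SimpleGraph.dist_le w) hw
  -- reachability from y to a
  have hreach : (deBruijnGraph d n).Reachable y a := by
    obtain ⟨w, _⟩ := deBruijn_shift_walk n y a (fun i hi hni => by omega)
    exact w.reachable
  -- distance from y to a is large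
  have hya : t < (deBruijnGraph d n).dist y a := by
    by_contra hcon
    push_neg at hcon
    obtain ⟨w, hwl⟩ := hreach.exists_walk_length_eq_dist
    obtain ⟨s, p, q, hps, hsq, hbud, hsur⟩ := deBruijn_survivors y a w
    rw [hwl] at hbud
    by_cases hst : s = (t:ℤ)
    · -- the prefix difference kills this case
      obtain ⟨i0, hi0, hxy⟩ := hpre
      have hq : q = t ∧ p = 0 := by omega
      have h1 : a ⟨i0 + t, by omega⟩ = y ⟨i0, by omega⟩ :=
        hsur i0 (i0 + t) (by omega) (by omega) (by omega) (by omega) (by omega)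
      have h2 : a ⟨i0 + t, by omega⟩ = x ⟨(i0 + t) - t, by omega⟩ :=
        ha_x (i0 + t) (by omega) (by omega)
      apply hxy
      have h3 : x ⟨(i0 + t) - t, by omega⟩ = x ⟨i0, by omega⟩ := by
        congr 1; exact Fin.ext (by simp)
      rw [← h3, ← h2, h1]
    · -- s < t; the adversarial prefix kills this case
      have hslt : s < (t:ℤ) := by omega
      have hsget : -(t:ℤ) ≤ s := by omega
      set J : ℤ := ((t:ℤ) + s) / 2 with hJ
      set I : ℤ := J - s with hI
      have hJ0 : 0 ≤ J := by omega
      have hI0 : 0 ≤ I := by omega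
      set jn : ℕ := J.toNat with hjn
      set inn : ℕ := I.toNat with hinn
      have hfacts : jn < t ∧ p ≤ inn ∧ inn + q + 1 ≤ n ∧ (jn:ℤ) = (inn:ℤ) + s ∧
          (inn = t - 1 - jn ∨ inn = t - jn) ∧ jn < n ∧ inn < n := by
        omega
      obtain ⟨hjt, hpin, hinq, hijs, hcase, hjnn, hinnn⟩ := hfacts
      have h1 : a ⟨jn, hjnn⟩ = y ⟨inn, hinnn⟩ := hsur inn jn hinnn hjnn hijs hpin hinq
      obtain ⟨hf1, hf2⟩ := ha_free jn hjnn hjt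
      rcases hcase with hc | hc
      · apply hf1
        rw [h1]
        congr 1
        exact Fin.ext (by simp [hc])
      · apply hf2
        rw [h1]
        congr 1
        exact Fin.ext (by simp [hc])
  refine ⟨⟨a, ?_, hxa, hya⟩, ?_⟩
  · intro i hi
    have := ha_x (t + i) (by omega) (by omega)
    rw [this]
    congr 1
    exact Fin.ext (by simp)
  · intro hEq
    have h1 : a ∈ ball (deBruijnGraph d n) t x := hxa
    rw [hEq] at h1
    have h2 : (deBruijnGraph d n).dist y a ≤ t := h1
    omega
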